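/- Let β ∈ (0,1) and define g(x) = (max(x, 0))^β · log(max(x, 1)) for x ∈ ℝ. Then: g is nondecreasing; g is differentiable on (1, ∞) with g′(x) → 0 as x → ∞; there exists γ ∈ (0,1) such that ∫₁^∞ exp(−(1−γ) g(x)) dx < ∞; and there exist constants x₀ > 0 and A > 0 such that g(x) − g(x−y) ≤ γ g(y) + A for all x, y with x₀ < y ≤ x/2. -/

import Mathlib

open MeasureTheory Filter Set

-- key monotonicity lemma: z ↦ z^(β-1) log z is decreasing past exp(1/(1-β))
lemma g3_key_mono {β y z : ℝ} (hβ0 : 0 < β) (hβ1 : β < 1)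
    (hy : Real.exp (1 / (1 - β)) ≤ y) (hyz : y ≤ z) :
    z ^ (β - 1) * Real.log z ≤ y ^ (β - 1) * Real.log y := by
  have hu0 : 0 < 1 - β := by linarith
  have hy1 : 1 < y := by
    calc (1:ℝ) = Real.exp 0 := Real.exp_zero.symm
    _ < Real.exp (1 / (1 - β)) := Real.exp_lt_exp.2 (by positivity)
    _ ≤ y := hy
  have hy0 : 0 < y := by linarith
  have hz1 : 1 < z := lt_of_lt_of_le hy1 hyz
  have hz0 : 0 < z := by linarith
  have hlogy : 1 / (1 - β) ≤ Real.log y := (Real.le_log_iff_exp_le hy0).2 hy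
  have hlogy0 : 0 < Real.log y := lt_of_lt_of_le (by positivity) hlogy
  have hs0 : 0 < z / y := by positivity
  have hs1 : 1 ≤ z / y := (one_le_div hy0).2 hyz
  set t := (z / y) ^ (1 - β) with ht
  have ht0 : 0 < t := Real.rpow_pos_of_pos hs0 _
  have hlogt : Real.log t = (1 - β) * Real.log (z / y) := Real.log_rpow hs0 _
  have h1 : Real.log t ≤ t - 1 := Real.log_le_sub_one_of_pos ht0
  have ht1 : 1 ≤ t := Real.one_le_rpow hs1 (le_of_lt hu0)
  -- log(z/y) ≤ (t-1)/(1-β) ≤ (t-1) * log y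
  have h2 : Real.log (z / y) ≤ (t - 1) * Real.log y := by
    have h2a : (1 - β) * Real.log (z / y) ≤ t - 1 := by rw [← hlogt]; exact h1
    have h2b : Real.log (z / y) ≤ (t - 1) * (1 / (1 - β)) := by
      rw [mul_one_div, le_div_iff₀ hu0]; nlinarith
    calc Real.log (z / y) ≤ (t - 1) * (1 / (1 - β)) := h2b
    _ ≤ (t - 1) * Real.log y := by
        apply mul_le_mul_of_nonneg_left hlogy (by linarith)
  have hlogzy : Real.log (z / y) = Real.log z - Real.log y :=
    Real.log_div (ne_of_gt hz0) (ne_of_gt hy0)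
  have h3 : Real.log z ≤ t * Real.log y := by
    rw [hlogzy] at h2; nlinarith
  -- multiply by z^(β-1) > 0
  have hzp : 0 < z ^ (β - 1) := Real.rpow_pos_of_pos hz0 _
  have key : z ^ (β - 1) * t = y ^ (β - 1) := by
    rw [ht, Real.div_rpow (le_of_lt hz0) (le_of_lt hy0)]
    rw [show β - 1 = -(1 - β) by ring, Real.rpow_neg (le_of_lt hz0),
      Real.rpow_neg (le_of_lt hy0)]
    have hzu : z ^ (1 - β) ≠ 0 := ne_of_gt (Real.rpow_pos_of_pos hz0 _)
    have hyu : y ^ (1 - β) ≠ 0 := ne_of_gt (Real.rpow_pos_of_pos hy0 _)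
    field_simp
  calc z ^ (β - 1) * Real.log z ≤ z ^ (β - 1) * (t * Real.log y) :=
        mul_le_mul_of_nonneg_left h3 (le_of_lt hzp)
  _ = (z ^ (β - 1) * t) * Real.log y := by ring
  _ = y ^ (β - 1) * Real.log y := by rw [key]

lemma g3_main_ineq {β : ℝ} (hβ0 : 0 < β) (hβ1 : β < 1) {x y : ℝ}
    (hy : Real.exp (max (1 / (1 - β)) (2 * 2 ^ β / (1 - β))) < y) (hxy : y ≤ x / 2) :
    x ^ β * Real.log x - (x - y) ^ β * Real.log (x - y)
      ≤ (1 + β) / 2 * (y ^ β * Real.log y) + 1 := by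
  have hu0 : 0 < 1 - β := by linarith
  have hE1 : Real.exp (1 / (1 - β)) ≤ Real.exp (max (1 / (1 - β)) (2 * 2 ^ β / (1 - β))) :=
    Real.exp_le_exp.2 (le_max_left _ _)
  have hy1 : 1 < y := by
    calc (1:ℝ) = Real.exp 0 := Real.exp_zero.symm
    _ < Real.exp (max (1 / (1 - β)) (2 * 2 ^ β / (1 - β))) := by
        apply Real.exp_lt_exp.2
        apply lt_max_of_lt_left; positivity
    _ < y := hy
  have hy0 : 0 < y := by linarith
  set z := x - y with hzdef
  have hzy : y ≤ z := by simp only [hzdef]; linarith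
  have hz1 : 1 < z := lt_of_lt_of_le hy1 hzy
  have hz0 : 0 < z := by linarith
  have hx0 : 0 < x := by linarith
  have hxz : x = z + y := by simp [hzdef]
  have hlogy : max (1 / (1 - β)) (2 * 2 ^ β / (1 - β)) ≤ Real.log y :=
    (Real.le_log_iff_exp_le hy0).2 hy.le
  have hlogy0 : 0 ≤ Real.log y := le_trans (le_max_of_le_left (by positivity)) hlogy
  have hlogz0 : 0 ≤ Real.log z := Real.log_nonneg hz1.le
  have hzB : z ^ β = z ^ (β - 1) * z := by
    rw [show β = (β - 1) + 1 by ring, Real.rpow_add hz0, Real.rpow_one]; ring_nf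
  have hyB : y ^ β = y ^ (β - 1) * y := by
    rw [show β = (β - 1) + 1 by ring, Real.rpow_add hy0, Real.rpow_one]; ring_nf
  -- h7 : 2^β ≤ (1-β)/2 * log y
  have h7 : (2:ℝ) ^ β ≤ (1 - β) / 2 * Real.log y := by
    have h7a : 2 * 2 ^ β / (1 - β) ≤ Real.log y := le_trans (le_max_right _ _) hlogy
    rw [div_le_iff₀ hu0] at h7a
    nlinarith
  -- h2 : log x - log z ≤ y / z
  have h2 : Real.log x - Real.log z ≤ y / z := by
    have := Real.log_le_sub_one_of_pos (show (0:ℝ) < x / z by positivity)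
    rw [Real.log_div (ne_of_gt hx0) (ne_of_gt hz0)] at this
    have hxzz : x / z - 1 = y / z := by rw [hxz]; field_simp; ring
    linarith
  -- h1 : x^β ≤ 2^β * z^β
  have h1 : x ^ β ≤ 2 ^ β * z ^ β := by
    calc x ^ β ≤ (2 * z) ^ β :=
          Real.rpow_le_rpow hx0.le (by linarith) hβ0.le
    _ = 2 ^ β * z ^ β := Real.mul_rpow (by norm_num) hz0.le
  -- h3 : x^β - z^β ≤ β * y * z^(β-1)  (Bernoulli via weighted AM-GM)
  have h3 : x ^ β - z ^ β ≤ β * y * z ^ (β - 1) := by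
    have amgm := Real.geom_mean_le_arith_mean2_weighted hβ0.le hu0.le
      (show (0:ℝ) ≤ x / z by positivity) (show (0:ℝ) ≤ 1 by norm_num)
      (show β + (1 - β) = 1 by ring)
    rw [Real.one_rpow, mul_one, mul_one] at amgm
    -- amgm : (x/z)^β ≤ β * (x/z) + (1-β)
    have hdiv : (x / z) ^ β = x ^ β / z ^ β := Real.div_rpow hx0.le hz0.le β
    rw [hdiv] at amgm
    have hzb0 : (0:ℝ) < z ^ β := Real.rpow_pos_of_pos hz0 _
    have hA : x ^ β ≤ (β * (x / z) + (1 - β)) * z ^ β := by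
      calc x ^ β = x ^ β / z ^ β * z ^ β := by field_simp
      _ ≤ _ := mul_le_mul_of_nonneg_right amgm hzb0.le
    have hB : (β * (x / z) + (1 - β)) * z ^ β
        = β * x * z ^ (β - 1) + (1 - β) * z ^ β := by
      rw [hzB]; field_simp
    rw [hB] at hA
    have hkey : β * x * z ^ (β - 1) + (1 - β) * z ^ β - z ^ β
        = β * y * z ^ (β - 1) := by rw [hzB, hxz]; ring
    linarith
  -- h4, h5 : monotonicity facts
  have h4 : z ^ (β - 1) * Real.log z ≤ y ^ (β - 1) * Real.log y :=
    g3_key_mono hβ0 hβ1 (le_trans hE1 hy.le) hzy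
  have h5 : z ^ (β - 1) ≤ y ^ (β - 1) :=
    Real.rpow_le_rpow_of_nonpos hy0 hzy (by linarith)
  -- Term 1
  have T1 : x ^ β * (Real.log x - Real.log z) ≤ 2 ^ β * y ^ β := by
    have hlog_le : Real.log z ≤ Real.log x := Real.log_le_log hz0 (by linarith)
    calc x ^ β * (Real.log x - Real.log z) ≤ (2 ^ β * z ^ β) * (y / z) := by
          apply mul_le_mul h1 h2 (by linarith) (by positivity)
    _ = 2 ^ β * y * z ^ (β - 1) := by rw [hzB]; field_simp
    _ ≤ 2 ^ β * y * y ^ (β - 1) := by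
          apply mul_le_mul_of_nonneg_left h5 (by positivity)
    _ = 2 ^ β * y ^ β := by rw [hyB]; ring
  -- Term 2
  have T2 : (x ^ β - z ^ β) * Real.log z ≤ β * (y ^ β * Real.log y) := by
    calc (x ^ β - z ^ β) * Real.log z ≤ β * y * z ^ (β - 1) * Real.log z :=
          mul_le_mul_of_nonneg_right h3 hlogz0
    _ = β * y * (z ^ (β - 1) * Real.log z) := by ring
    _ ≤ β * y * (y ^ (β - 1) * Real.log y) := by
          apply mul_le_mul_of_nonneg_left h4 (by positivity)
    _ = β * (y ^ β * Real.log y) := by rw [hyB]; ring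
  have h7' : 2 ^ β * y ^ β ≤ (1 - β) / 2 * (y ^ β * Real.log y) := by
    have := mul_le_mul_of_nonneg_right h7 (Real.rpow_nonneg hy0.le β)
    nlinarith
  nlinarith [T1, T2, h7']

lemma g3_ev (β : ℝ) {x : ℝ} (hx : 1 < x) :
    (fun t : ℝ => max t 0 ^ β * Real.log (max t 1)) =ᶠ[nhds x]
      fun t : ℝ => t ^ β * Real.log t := by
  filter_upwards [eventually_gt_nhds hx] with t ht
  rw [max_eq_left (by linarith : (0:ℝ) ≤ t), max_eq_left (by linarith : (1:ℝ) ≤ t)]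

lemma g3_hasDeriv {β x : ℝ} (hx : 1 < x) :
    HasDerivAt (fun t : ℝ => t ^ β * Real.log t)
      (β * x ^ (β - 1) * Real.log x + x ^ β * x⁻¹) x :=
  (Real.hasDerivAt_rpow_const (Or.inl (by linarith : x ≠ 0))).mul
    (Real.hasDerivAt_log (by linarith : x ≠ 0))

/-- **Example, function `g₃(x) = (x⁺)^β log(max(x,1))`, `β ∈ (0,1)`,** satisfies the
substance of conditions (C1)–(C3). -/
theorem g_weibull_log_satisfies_conditions (β : ℝ) (hβ : β ∈ Set.Ioo (0:ℝ) 1) :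
    Monotone (fun x : ℝ => max x 0 ^ β * Real.log (max x 1)) ∧
    (∀ x ∈ Set.Ioi (1:ℝ),
      DifferentiableAt ℝ (fun x : ℝ => max x 0 ^ β * Real.log (max x 1)) x) ∧
    Tendsto (deriv (fun x : ℝ => max x 0 ^ β * Real.log (max x 1))) atTop (nhds 0) ∧
    ∃ γ ∈ Set.Ioo (0:ℝ) 1,
      IntegrableOn
        (fun x : ℝ => Real.exp (-(1 - γ) * (max x 0 ^ β * Real.log (max x 1))))
        (Set.Ici 1) ∧
      ∃ x₀ > (0:ℝ), ∃ A > (0:ℝ), ∀ x y : ℝ, x₀ < y → y ≤ x / 2 →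
        max x 0 ^ β * Real.log (max x 1) - max (x - y) 0 ^ β * Real.log (max (x - y) 1)
          ≤ γ * (max y 0 ^ β * Real.log (max y 1)) + A := by
  obtain ⟨hβ0, hβ1⟩ := hβ
  refine ⟨?_, ?_, ?_, ?_⟩
  -- Monotone
  · intro a b hab
    show max a 0 ^ β * Real.log (max a 1) ≤ max b 0 ^ β * Real.log (max b 1)
    by_cases hb1 : b ≤ 1
    · have ha1 : a ≤ 1 := le_trans hab hb1
      rw [max_eq_right hb1, max_eq_right ha1, Real.log_one, mul_zero, mul_zero]
    · push_neg at hb1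
      have hgb0 : 0 ≤ max b 0 ^ β * Real.log (max b 1) :=
        mul_nonneg (Real.rpow_nonneg (le_max_right _ _) _)
          (Real.log_nonneg (le_max_right _ _))
      by_cases ha1 : a ≤ 1
      · rw [max_eq_right ha1, Real.log_one, mul_zero]; exact hgb0
      · push_neg at ha1
        rw [max_eq_left (by linarith : (0:ℝ) ≤ a), max_eq_left ha1.le,
          max_eq_left (by linarith : (0:ℝ) ≤ b), max_eq_left (by linarith : (1:ℝ) ≤ b)]
        exact mul_le_mul (Real.rpow_le_rpow (by linarith) hab hβ0.le)
          (Real.log_le_log (by linarith) hab) (Real.log_nonneg ha1.le)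
          (Real.rpow_nonneg (by linarith) _)
  -- Differentiable on (1,∞)
  · intro x hx
    have hx1 : 1 < x := hx
    exact ((g3_ev β hx1).differentiableAt_iff).2 (g3_hasDeriv hx1).differentiableAt
  -- deriv → 0
  · have tend1 : Tendsto (fun x : ℝ => x ^ (β - 1) * Real.log x) atTop (nhds 0) := by
      have hlo := (isLittleO_log_rpow_atTop (show (0:ℝ) < 1 - β by linarith))
      have h := hlo.tendsto_div_nhds_zero
      refine h.congr' ?_
      filter_upwards [eventually_gt_atTop (0:ℝ)] with x hx
      rw [show β - 1 = -(1 - β) by ring, Real.rpow_neg hx.le, div_eq_mul_inv, mul_comm]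
    have tend2 : Tendsto (fun x : ℝ => x ^ β * x⁻¹) atTop (nhds 0) := by
      have h := tendsto_rpow_neg_atTop (show (0:ℝ) < 1 - β by linarith)
      refine h.congr' ?_
      filter_upwards [eventually_gt_atTop (0:ℝ)] with x hx
      rw [show -(1 - β) = β - 1 by ring, Real.rpow_sub hx, Real.rpow_one, div_eq_mul_inv]
    have comb : Tendsto (fun x : ℝ => β * (x ^ (β - 1) * Real.log x) + x ^ β * x⁻¹)
        atTop (nhds 0) := by
      have := (tend1.const_mul β).add tend2
      simpa using this
    refine comb.congr' ?_
    filter_upwards [eventually_gt_atTop (1:ℝ)] with x hx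
    rw [(g3_ev β hx).deriv_eq, (g3_hasDeriv hx).deriv]
    ring
  -- (C3)
  · refine ⟨(1 + β) / 2, ⟨by linarith, by linarith⟩, ?_, ?_⟩
    -- integrability
    · set γ := (1 + β) / 2 with hγdef
      have hc : 0 < 1 - γ := by simp only [hγdef]; linarith
      set X := max 1 ((2 / (1 - γ)) ^ (1 / β)) with hXdef
      have hX1 : (1:ℝ) ≤ X := le_max_left _ _
      have hdom : IntegrableOn (fun x : ℝ => X ^ 2 * x ^ (-2 : ℝ)) (Ici 1) := by
        rw [integrableOn_Ici_iff_integrableOn_Ioi]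
        exact (integrableOn_Ioi_rpow_of_lt (by norm_num) one_pos).const_mul _
      apply hdom.mono'
      · apply Continuous.aestronglyMeasurable
        apply Real.continuous_exp.comp
        apply Continuous.mul continuous_const
        exact ((continuous_id.max continuous_const).rpow_const
            (fun x => Or.inr hβ0.le)).mul
          ((continuous_id.max continuous_const).log (fun x => by positivity))
      · rw [ae_restrict_iff' measurableSet_Ici]
        apply ae_of_all
        intro x hx
        have hx1 : (1:ℝ) ≤ x := hx
        have hx0 : (0:ℝ) < x := by linarith
        rw [Real.norm_eq_abs, abs_of_pos (Real.exp_pos _),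
          max_eq_left (by linarith : (0:ℝ) ≤ x), max_eq_left hx1]
        have hlogx0 : 0 ≤ Real.log x := Real.log_nonneg hx1
        have hxβ0 : 0 ≤ x ^ β := Real.rpow_nonneg hx0.le _
        have hx2 : x ^ (-2 : ℝ) = (x ^ 2)⁻¹ := by
          rw [Real.rpow_neg hx0.le, show (2:ℝ) = ((2:ℕ):ℝ) by norm_num,
            Real.rpow_natCast]
        by_cases hcase : x ≤ X
        · have hL : Real.exp (-(1 - γ) * (x ^ β * Real.log x)) ≤ 1 :=
            Real.exp_le_one_iff.2 (by nlinarith [mul_nonneg hxβ0 hlogx0])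
          have hR : (1:ℝ) ≤ X ^ 2 * x ^ (-2 : ℝ) := by
            rw [hx2]
            have h2 : x ^ 2 ≤ X ^ 2 := by nlinarith
            have := (one_le_div (by positivity : (0:ℝ) < x ^ 2)).2 h2
            rw [div_eq_mul_inv] at this
            linarith
          linarith
        · push_neg at hcase
          have hxb : 2 / (1 - γ) ≤ x ^ β := by
            have hble : (2 / (1 - γ)) ^ (1 / β) ≤ x :=
              le_of_lt (lt_of_le_of_lt (le_max_right 1 _) hcase)
            have h := Real.rpow_le_rpow (Real.rpow_nonneg (by positivity) _) hble hβ0.le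
            rwa [← Real.rpow_mul (by positivity : (0:ℝ) ≤ 2 / (1 - γ)),
              one_div, inv_mul_cancel₀ (ne_of_gt hβ0), Real.rpow_one] at h
          have hexp : -(1 - γ) * (x ^ β * Real.log x) ≤ Real.log x * (-2) := by
            have h1 : 2 ≤ (1 - γ) * x ^ β := by
              rw [div_le_iff₀ hc] at hxb; linarith
            nlinarith
          calc Real.exp (-(1 - γ) * (x ^ β * Real.log x))
              ≤ Real.exp (Real.log x * (-2)) := Real.exp_le_exp.2 hexp
          _ = x ^ (-2 : ℝ) := (Real.rpow_def_of_pos hx0 _).symm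
          _ ≤ X ^ 2 * x ^ (-2 : ℝ) := by
              nlinarith [Real.rpow_pos_of_pos hx0 (-2 : ℝ), hX1, sq_nonneg (X - 1)]
    -- the (C3) inequality
    · refine ⟨Real.exp (max (1 / (1 - β)) (2 * 2 ^ β / (1 - β))), Real.exp_pos _,
        1, one_pos, ?_⟩
      intro x y hx₀y hyx
      have hy1 : 1 < y := by
        calc (1:ℝ) = Real.exp 0 := Real.exp_zero.symm
        _ < Real.exp (max (1 / (1 - β)) (2 * 2 ^ β / (1 - β))) := by
            apply Real.exp_lt_exp.2
            exact lt_max_of_lt_left (div_pos one_pos (by linarith))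
        _ < y := hx₀y
      have hz1 : 1 < x - y := by linarith
      have hx1 : 1 < x := by linarith
      rw [max_eq_left (by linarith : (0:ℝ) ≤ x), max_eq_left hx1.le,
        max_eq_left (by linarith : (0:ℝ) ≤ x - y), max_eq_left hz1.le,
        max_eq_left (by linarith : (0:ℝ) ≤ y), max_eq_left hy1.le]
      exact g3_main_ineq hβ0 hβ1 hx₀y hyx
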